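/- (Main theorem, part (b).) If f : [k]^n → [k] (with k ≥ 3) is neutral but not a weighted plurality function, then there exists a probability distribution P on [k]^n such that P(X_i = 2) > P(X_i = 1) for all i ∈ [n], yet P(f(X) = 1) = 1. -/

import Mathlib

open Finset
open scoped Classical

noncomputable section

/-- Probability of an event under a finitely supported distribution `p`. -/
def Pr {Ω : Type*} [Fintype Ω] (p : Ω → ℝ) (φ : Ω → Prop) : ℝ :=
  ∑ x, if φ x then p x else 0

/-- Conditional probability `P(φ | ψ)`. -/
def condPr {Ω : Type*} [Fintype Ω] (p : Ω → ℝ) (φ ψ : Ω → Prop) : ℝ :=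
  Pr p (fun x => φ x ∧ ψ x) / Pr p ψ

/-- Covariance of the indicators of `φ` and `ψ`. -/
def Cov {Ω : Type*} [Fintype Ω] (p : Ω → ℝ) (φ ψ : Ω → Prop) : ℝ :=
  Pr p (fun x => φ x ∧ ψ x) - Pr p φ * Pr p ψ

/-- The effect of voter `i`:
`e_i(f,P) = Σ_j [P(f(X)=j | X_i=j) − P(f(X)=j | X_i≠j)]`. -/
def effect {n k : ℕ} (p : (Fin n → Fin k) → ℝ) (f : (Fin n → Fin k) → Fin k)
    (i : Fin n) : ℝ :=
  ∑ j : Fin k,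
    (condPr p (fun x => f x = j) (fun x => x i = j)
      - condPr p (fun x => f x = j) (fun x => x i ≠ j))

lemma exists_perm_pair {α : Type*} [DecidableEq α] {a b c d : α} (hab : a ≠ b) (hcd : c ≠ d) :
    ∃ σ : Equiv.Perm α, σ a = c ∧ σ b = d := by
  refine ⟨(Equiv.swap a c).trans (Equiv.swap ((Equiv.swap a c) b) d), ?_, ?_⟩
  · have hb' : (Equiv.swap a c) b ≠ c := by
      intro h
      have := (Equiv.swap a c).injective (h.trans (Equiv.swap_apply_left a c).symm)
      exact hab this.symm
    simp only [Equiv.trans_apply, Equiv.swap_apply_left]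
    exact Equiv.swap_apply_of_ne_of_ne (Ne.symm hb') hcd
  · simp only [Equiv.trans_apply, Equiv.swap_apply_left]

lemma build_dist {n k : ℕ} [NeZero k] (hk : 3 ≤ k)
    (f : (Fin n → Fin k) → Fin k)
    (hneutral : ∀ (σ : Equiv.Perm (Fin k)) (x : Fin n → Fin k),
      f (fun i => σ (x i)) = σ (f x))
    {T : Type*} [Fintype T] (x : T → Fin n → Fin k) (b : T → Fin k)
    (hb : ∀ t, b t ≠ f (x t))
    (μ : T → ℝ) (hμ0 : ∀ t, 0 ≤ μ t) (hμ1 : ∑ t, μ t = 1)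
    (hneg : ∀ i : Fin n, ∑ t, μ t *
      ((if x t i = f (x t) then (1:ℝ) else 0) - (if x t i = b t then 1 else 0)) < 0) :
    ∃ p : (Fin n → Fin k) → ℝ, (∀ x, 0 ≤ p x) ∧ (∑ x, p x = 1) ∧
      (∀ i : Fin n, Pr p (fun x => x i = 1) < Pr p (fun x => x i = 2)) ∧
      Pr p (fun x => f x = 1) = 1 := by
  have h12 : (1 : Fin k) ≠ 2 := by
    have h2 : ((2:Fin k) : ℕ) = 2 := by
      simp [OfNat.ofNat, Fin.ofNat, Nat.mod_eq_of_lt (by omega : (2:ℕ) < k)]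
    have h1 : ((1:Fin k) : ℕ) = 1 := by
      simp [Fin.val_one', Nat.mod_eq_of_lt (by omega : (1:ℕ) < k)]
    intro h; rw [Fin.ext_iff, h1, h2] at h; omega
  choose σ hσ1 hσ2 using fun t : T => exists_perm_pair (Ne.symm (hb t)) h12
  set y : T → Fin n → Fin k := fun t i => σ t (x t i) with hy
  set p : (Fin n → Fin k) → ℝ := fun z => ∑ t, if z = y t then μ t else 0 with hp
  have hPr : ∀ φ : (Fin n → Fin k) → Prop,
      Pr p φ = ∑ t, if φ (y t) then μ t else 0 := by
    intro φ
    unfold Pr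
    have step : ∀ z : Fin n → Fin k,
        (if φ z then p z else 0) = ∑ t, if z = y t then (if φ z then μ t else 0) else 0 := by
      intro z
      by_cases h : φ z <;> simp [hp, h]
    rw [Finset.sum_congr rfl fun z _ => step z, Finset.sum_comm]
    refine Finset.sum_congr rfl fun t _ => ?_
    rw [Finset.sum_ite_eq' Finset.univ (y t) (fun z => if φ z then μ t else 0)]
    simp
  have hfy : ∀ t, f (y t) = 1 := by
    intro t
    have := hneutral (σ t) (x t)
    rw [hy]
    simpa [hσ1 t] using this
  refine ⟨p, ?_, ?_, ?_, ?_⟩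
  · intro z
    exact Finset.sum_nonneg fun t _ => by by_cases h : z = y t <;> simp [h, hμ0 t]
  · have : ∑ z, p z = Pr p (fun _ => True) := by
      unfold Pr; simp
    rw [this, hPr]; simpa using hμ1
  · intro i
    rw [hPr, hPr]
    have key : ∀ t : T, (if y t i = 2 then μ t else 0) - (if y t i = 1 then μ t else 0)
        = - (μ t * ((if x t i = f (x t) then (1:ℝ) else 0) - (if x t i = b t then 1 else 0))) := by
      intro t
      have h1 : (y t i = 1) ↔ (x t i = f (x t)) := by
        rw [hy, ← hσ1 t]
        exact ⟨fun h => (σ t).injective h, fun h => congrArg (σ t) h⟩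
      have h2 : (y t i = 2) ↔ (x t i = b t) := by
        rw [hy, ← hσ2 t]
        exact ⟨fun h => (σ t).injective h, fun h => congrArg (σ t) h⟩
      have e1 : (if y t i = 1 then μ t else 0) = (if x t i = f (x t) then μ t else 0) := by
        simp only [h1]
      have e2 : (if y t i = 2 then μ t else 0) = (if x t i = b t then μ t else 0) := by
        simp only [h2]
      rw [e1, e2]
      by_cases hA : x t i = f (x t) <;> by_cases hB : x t i = b t
      · exact absurd (hA ▸ hB : f (x t) = b t).symm (hb t)
      all_goals simp [hA, hB, hb t, Ne.symm (hb t)]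
    have : (∑ t, if y t i = 2 then μ t else 0) - (∑ t, if y t i = 1 then μ t else 0)
        = - ∑ t, μ t * ((if x t i = f (x t) then (1:ℝ) else 0) - (if x t i = b t then 1 else 0)) := by
      rw [← Finset.sum_sub_distrib, ← Finset.sum_neg_distrib]
      exact Finset.sum_congr rfl fun t _ => key t
    have hlt := hneg i
    have h3 : (∑ t, if y t i = 1 then μ t else 0) < ∑ t, if y t i = 2 then μ t else 0 := by
      linarith
    convert h3 using 2 <;> congr 1
  · rw [hPr]
    simp only [hfy, if_pos]
    exact hμ1

-- main theorem body, case 2 development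
lemma no_sep {n k : ℕ} [NeZero k] (hk : 3 ≤ k)
    (f : (Fin n → Fin k) → Fin k)
    (hneutral : ∀ (σ : Equiv.Perm (Fin k)) (x : Fin n → Fin k),
      f (fun i => σ (x i)) = σ (f x))
    (hnotwp : ¬ ∃ w : Fin n → ℝ, (∀ i, 0 ≤ w i) ∧ (∑ i, w i = 1) ∧
      ∀ x (a b : Fin k), f x = a →
        (∑ i, if x i = b then w i else 0) ≤ ∑ i, if x i = a then w i else 0)
    (T : Type) [Fintype T] [Nonempty T] (x : T → Fin n → Fin k) (b : T → Fin k)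
    (hb : ∀ t, b t ≠ f (x t))
    (hsurj : ∀ (z : Fin n → Fin k) (c : Fin k), c ≠ f z → ∃ t, x t = z ∧ b t = c)
    (hC : ¬ ∃ μ : T → ℝ, (∀ t, 0 ≤ μ t) ∧ (∑ t, μ t = 1) ∧ ∀ i : Fin n, (∑ t, μ t *
      ((if x t i = f (x t) then (1:ℝ) else 0) - (if x t i = b t then 1 else 0))) < 0) :
    False := by
  set R : T → Fin n → ℝ := fun t i =>
    (if x t i = f (x t) then (1:ℝ) else 0) - (if x t i = b t then 1 else 0) with hR
  set C : Set (Fin n → ℝ) := {c | ∃ μ : T → ℝ, (∀ t, 0 ≤ μ t) ∧ (∑ t, μ t = 1) ∧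
    ∀ i, ∑ t, μ t * R t i = c i} with hCdef
  set N : Set (Fin n → ℝ) := Set.univ.pi fun _ : Fin n => Set.Iio (0:ℝ) with hNdef
  have hCconv : Convex ℝ C := by
    rintro c₁ ⟨μ₁, h₁0, h₁1, h₁⟩ c₂ ⟨μ₂, h₂0, h₂1, h₂⟩ a b' ha hb' hab
    refine ⟨fun t => a * μ₁ t + b' * μ₂ t,
      fun t => add_nonneg (mul_nonneg ha (h₁0 t)) (mul_nonneg hb' (h₂0 t)), ?_, fun i => ?_⟩
    · rw [Finset.sum_add_distrib, ← Finset.mul_sum, ← Finset.mul_sum, h₁1, h₂1]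
      simpa using hab
    · have : ∀ t, (a * μ₁ t + b' * μ₂ t) * R t i
          = a * (μ₁ t * R t i) + b' * (μ₂ t * R t i) := fun t => by ring
      rw [Finset.sum_congr rfl fun t _ => this t, Finset.sum_add_distrib,
        ← Finset.mul_sum, ← Finset.mul_sum, h₁ i, h₂ i]
      simp [smul_eq_mul]
  have hNconv : Convex ℝ N := convex_pi fun i _ => convex_Iio 0
  have hNopen : IsOpen N := isOpen_set_pi Set.finite_univ fun _ _ => isOpen_Iio
  have hmemN : ∀ c : Fin n → ℝ, c ∈ N ↔ ∀ i, c i < 0 := by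
    intro c; constructor
    · intro h i; exact h i (Set.mem_univ i)
    · intro h i _; exact h i
  have hdisj : Disjoint N C := by
    rw [Set.disjoint_left]
    rintro c hcN ⟨μ, h0, h1, h2⟩
    exact hC ⟨μ, h0, h1, fun i => (h2 i) ▸ ((hmemN c).1 hcN i)⟩
  obtain ⟨g, u, hgN, hgC⟩ := geometric_hahn_banach_open hNconv hNopen hCconv hdisj
  set e : Fin n → (Fin n → ℝ) := fun i j => if i = j then (1:ℝ) else 0 with he
  have hgv : ∀ v : Fin n → ℝ, g v = ∑ i, v i * g (e i) := by
    intro v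
    conv_lhs => rw [pi_eq_sum_univ v]
    rw [map_sum]
    exact Finset.sum_congr rfl fun i _ => by rw [map_smul, smul_eq_mul]
  set S : ℝ := ∑ i, g (e i) with hS
  -- members of N
  have hmemA : ∀ (i : Fin n) (s : ℝ), 0 ≤ s →
      (fun j => (if i = j then -s else 0) - 1) ∈ N := by
    intro i s hs
    rw [hmemN]
    intro j
    by_cases h : i = j <;> simp [h] <;> linarith
  have hgA : ∀ (i : Fin n) (s : ℝ), 0 ≤ s →
      g (fun j => (if i = j then -s else 0) - 1) = -s * g (e i) - S := by
    intro i s hs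
    rw [hgv]
    have : ∀ j, ((if i = j then -s else 0) - 1) * g (e j)
        = (if i = j then -s * g (e j) else 0) - g (e j) := by
      intro j; by_cases h : i = j
      · simp [h]; ring
      · simp [h]
    rw [Finset.sum_congr rfl fun j _ => this j, Finset.sum_sub_distrib, hS,
      Finset.sum_ite_eq Finset.univ i (fun j => -s * g (e j))]
    simp
  -- claim A : coefficients nonneg
  have hge0 : ∀ i, 0 ≤ g (e i) := by
    intro i
    by_contra hneg
    push_neg at hneg
    set s : ℝ := max 0 ((u + S + 1) / (-g (e i))) with hsdef
    have hs0 : 0 ≤ s := le_max_left _ _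
    have h1 := hgN _ (hmemA i s hs0)
    rw [hgA i s hs0] at h1
    have hq : (u + S + 1) / (-g (e i)) ≤ s := le_max_right _ _
    have hpos : 0 < -g (e i) := by linarith
    have : u + S + 1 ≤ s * (-g (e i)) := by
      rw [← div_le_iff₀ hpos] at *
      exact hq
    nlinarith
  have hS0 : 0 ≤ S := Finset.sum_nonneg fun i _ => hge0 i
  -- claim B : u ≥ 0
  have hmemB : ∀ ε : ℝ, 0 < ε → (fun _ : Fin n => -ε) ∈ N := by
    intro ε hε; rw [hmemN]; intro i; simpa using neg_neg_iff_pos.mpr hε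
  have hgB : ∀ ε : ℝ, g (fun _ : Fin n => -ε) = -ε * S := by
    intro ε; rw [hgv, hS, Finset.mul_sum]
  have hu0 : 0 ≤ u := by
    by_contra hu
    push_neg at hu
    rcases eq_or_lt_of_le hS0 with hS0' | hS0'
    · have h2 := hgN _ (hmemB 1 one_pos)
      rw [hgB, ← hS0'] at h2
      linarith
    · have hεpos : 0 < -u / (2 * S) := div_pos (by linarith) (by linarith)
      have heq : -(-u / (2 * S)) * S = u / 2 := by field_simp
      have h2 := hgN _ (hmemB _ hεpos)
      rw [hgB, heq] at h2
      linarith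
  -- single rows belong to C
  have hrow : ∀ t : T, R t ∈ C := by
    intro t
    refine ⟨fun s => if s = t then 1 else 0,
      fun s => by by_cases h : s = t <;> simp [h], ?_, fun i => ?_⟩
    · rw [Finset.sum_ite_eq' Finset.univ t (fun _ => (1:ℝ))]; simp
    · have : ∀ s, (if s = t then (1:ℝ) else 0) * R s i = if s = t then R s i else 0 := by
        intro s; by_cases h : s = t <;> simp [h]
      rw [Finset.sum_congr rfl fun s _ => this s,
        Finset.sum_ite_eq' Finset.univ t (fun s => R s i)]
      simp
  have hSpos : 0 < S := by
    rcases eq_or_lt_of_le hS0 with h0 | h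
    swap
    · exact h
    exfalso
    have hall : ∀ i, g (e i) = 0 := by
      intro i
      exact (Finset.sum_eq_zero_iff_of_nonneg (fun i _ => hge0 i)).1 h0.symm i (Finset.mem_univ i)
    have hg0 : ∀ v : Fin n → ℝ, g v = 0 := fun v => by rw [hgv]; simp [hall]
    have t₀ := Classical.arbitrary T
    have h1 := hgC _ (hrow t₀)
    have h2 := hgN _ (hmemB 1 one_pos)
    rw [hg0] at h1 h2
    linarith
  apply hnotwp
  refine ⟨fun i => g (e i) / S, fun i => div_nonneg (hge0 i) hS0, ?_, ?_⟩
  · rw [← Finset.sum_div, ← hS]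
    exact div_self (ne_of_gt hSpos)
  · intro z a c hfa
    subst hfa
    by_cases hcf : c = f z
    · rw [hcf]
    · obtain ⟨t, hxt, hbt⟩ := hsurj z c hcf
      have h1 := hgC _ (hrow t)
      have h2 : g (R t) = (∑ i, if z i = f z then g (e i) else 0)
          - ∑ i, if z i = c then g (e i) else 0 := by
        rw [hgv]
        have : ∀ i, R t i * g (e i)
            = (if z i = f z then g (e i) else 0) - (if z i = c then g (e i) else 0) := by
          intro i
          rw [hR]
          simp only [hxt, hbt]
          by_cases hA : z i = f z <;> by_cases hB : z i = c <;>
            simp [hA, hB, hcf, Ne.symm hcf]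
        rw [Finset.sum_congr rfl fun i _ => this i, Finset.sum_sub_distrib]
      have h3 : (∑ i, if z i = c then g (e i) else 0)
          ≤ ∑ i, if z i = f z then g (e i) else 0 := by
        rw [h2] at h1; linarith
      have conv1 : (∑ i, if z i = c then g (e i) / S else 0)
          = (∑ i, if z i = c then g (e i) else 0) / S := by
        rw [Finset.sum_div]
        exact Finset.sum_congr rfl fun i _ => by by_cases h : z i = c <;> simp [h]
      have conv2 : (∑ i, if z i = f z then g (e i) / S else 0)
          = (∑ i, if z i = f z then g (e i) else 0) / S := by
        rw [Finset.sum_div]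
        exact Finset.sum_congr rfl fun i _ => by by_cases h : z i = f z <;> simp [h]
      have h4 : (∑ i, if z i = c then g (e i) / S else 0)
          ≤ ∑ i, if z i = f z then g (e i) / S else 0 := by
        rw [conv1, conv2]
        exact (div_le_div_iff_of_pos_right hSpos).mpr h3
      exact h4


theorem not_weighted_plurality_fails_to_aggregate {n k : ℕ} [NeZero k] (hk : 3 ≤ k)
    (f : (Fin n → Fin k) → Fin k)
    (hneutral : ∀ (σ : Equiv.Perm (Fin k)) (x : Fin n → Fin k),
      f (fun i => σ (x i)) = σ (f x))
    (hnotwp : ¬ ∃ w : Fin n → ℝ, (∀ i, 0 ≤ w i) ∧ (∑ i, w i = 1) ∧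
      ∀ x (a b : Fin k), f x = a →
        (∑ i, if x i = b then w i else 0) ≤ ∑ i, if x i = a then w i else 0) :
    ∃ p : (Fin n → Fin k) → ℝ, (∀ x, 0 ≤ p x) ∧ (∑ x, p x = 1) ∧
      (∀ i : Fin n, Pr p (fun x => x i = 1) < Pr p (fun x => x i = 2)) ∧
      Pr p (fun x => f x = 1) = 1 := by
  classical
  set T := {q : (Fin n → Fin k) × Fin k // q.2 ≠ f q.1} with hT
  have hTne : Nonempty T := by
    have h01 : (1 : Fin k) ≠ 0 := by
      intro h
      have h1 : ((1:Fin k) : ℕ) = 1 := by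
        simp [Fin.val_one', Nat.mod_eq_of_lt (by omega : (1:ℕ) < k)]
      rw [Fin.ext_iff, h1] at h
      simp at h
    by_cases h : f (fun _ => 0) = 0
    · exact ⟨⟨((fun _ => 0), 1), by rw [h]; exact h01⟩⟩
    · exact ⟨⟨((fun _ => 0), 0), fun h0 => h h0.symm⟩⟩
  by_cases hC : ∃ μ : T → ℝ, (∀ t, 0 ≤ μ t) ∧ (∑ t, μ t = 1) ∧ ∀ i : Fin n, (∑ t, μ t *
      ((if t.1.1 i = f t.1.1 then (1:ℝ) else 0) - (if t.1.1 i = t.1.2 then 1 else 0))) < 0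
  · obtain ⟨μ, h0, h1, h2⟩ := hC
    exact build_dist hk f hneutral (fun t : T => t.1.1) (fun t : T => t.1.2)
      (fun t => t.2) μ h0 h1 h2
  · exact absurd (no_sep hk f hneutral hnotwp T (fun t : T => t.1.1) (fun t : T => t.1.2)
      (fun t => t.2) (fun z c hc => ⟨⟨(z, c), hc⟩, rfl, rfl⟩) hC) id
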